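/- Let B ∈ {-1,0,1}^{m×n} and suppose B_{ij} = 0. If the sign s ∈ {-1,+1} is added as the new value of B_{ij}, then the number of balanced butterflies (4-cycles through the new edge with even number of negative edges) created minus the number of unbalanced butterflies created equals s · (B B^T B)_{ij}. Consequently, choosing s = sign((B B^T B)_{ij}) maximizes the net gain of balanced butterflies, and this net gain equals |(B B^T B)_{ij}|. -/
import Mathlib


open Matrix

lemma count_sub_aux {α : Type*} [DecidableEq α] (s : Finset α) (f : α → ℤ)
    (h : ∀ a ∈ s, f a = -1 ∨ f a = 0 ∨ f a = 1) :
    ((s.filter (fun a => f a = 1)).card : ℤ) -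
      ((s.filter (fun a => f a = -1)).card : ℤ) = ∑ a ∈ s, f a := by
  classical
  induction s using Finset.induction_on with
  | empty => simp
  | @insert a t ha ih =>
    have ht : ∀ b ∈ t, f b = -1 ∨ f b = 0 ∨ f b = 1 := fun b hb => h b (Finset.mem_insert_of_mem hb)
    have ha1 : a ∉ t.filter (fun b => f b = 1) := fun hx => ha (Finset.mem_filter.mp hx).1
    have ha2 : a ∉ t.filter (fun b => f b = -1) := fun hx => ha (Finset.mem_filter.mp hx).1
    rcases h a (Finset.mem_insert_self a t) with h0 | h0 | h0 <;>
      simp [Finset.filter_insert, Finset.sum_insert ha, h0, Finset.card_insert_of_notMem,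
        ha1, ha2, ← ih ht] <;> ring

/-- Adding a link of sign `s` at a non-edge `(i,j)` creates a net gain of
`s * (B * Bᵀ * B) i j` balanced butterflies (balanced minus unbalanced), so taking
`s = sign ((B * Bᵀ * B) i j)` maximizes the net gain, which then equals
`|(B * Bᵀ * B) i j|`. -/
theorem adding_sign_net_balanced_butterflies {m n : ℕ} (B : Matrix (Fin m) (Fin n) ℤ)
    (hent : ∀ i j, B i j = -1 ∨ B i j = 0 ∨ B i j = 1) (i : Fin m) (j : Fin n)
    (hij : B i j = 0) :
    (∀ s : ℤ, s = -1 ∨ s = 1 →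
      ((Finset.univ.filter (fun p : Fin m × Fin n =>
          B i p.2 ≠ 0 ∧ B p.1 p.2 ≠ 0 ∧ B p.1 j ≠ 0 ∧
          s * B i p.2 * B p.1 p.2 * B p.1 j = 1)).card : ℤ) -
      ((Finset.univ.filter (fun p : Fin m × Fin n =>
          B i p.2 ≠ 0 ∧ B p.1 p.2 ≠ 0 ∧ B p.1 j ≠ 0 ∧
          s * B i p.2 * B p.1 p.2 * B p.1 j = -1)).card : ℤ) =
        s * (B * Bᵀ * B) i j) ∧
    Int.sign ((B * Bᵀ * B) i j) * (B * Bᵀ * B) i j = |(B * Bᵀ * B) i j| ∧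
    (∀ s : ℤ, s = -1 ∨ s = 1 → s * (B * Bᵀ * B) i j ≤ |(B * Bᵀ * B) i j|) := by
  refine ⟨?_, ?_, ?_⟩
  · intro s hs
    set f : Fin m × Fin n → ℤ := fun p => s * B i p.2 * B p.1 p.2 * B p.1 j with hf
    have hnz : ∀ p : Fin m × Fin n, f p ≠ 0 →
        B i p.2 ≠ 0 ∧ B p.1 p.2 ≠ 0 ∧ B p.1 j ≠ 0 := by
      intro p hp
      refine ⟨fun h0 => hp ?_, fun h0 => hp ?_, fun h0 => hp ?_⟩ <;> simp [hf, h0]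
    have e1 : (Finset.univ.filter (fun p : Fin m × Fin n =>
          B i p.2 ≠ 0 ∧ B p.1 p.2 ≠ 0 ∧ B p.1 j ≠ 0 ∧ f p = 1)) =
        Finset.univ.filter (fun p => f p = 1) := by
      apply Finset.filter_congr
      intro p _
      constructor
      · exact fun h => h.2.2.2
      · intro h; exact ⟨(hnz p (by simp [h])).1, (hnz p (by simp [h])).2.1,
          (hnz p (by simp [h])).2.2, h⟩
    have e2 : (Finset.univ.filter (fun p : Fin m × Fin n =>
          B i p.2 ≠ 0 ∧ B p.1 p.2 ≠ 0 ∧ B p.1 j ≠ 0 ∧ f p = -1)) =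
        Finset.univ.filter (fun p => f p = -1) := by
      apply Finset.filter_congr
      intro p _
      constructor
      · exact fun h => h.2.2.2
      · intro h; exact ⟨(hnz p (by simp [h])).1, (hnz p (by simp [h])).2.1,
          (hnz p (by simp [h])).2.2, h⟩
    have hval : ∀ p : Fin m × Fin n, f p = -1 ∨ f p = 0 ∨ f p = 1 := by
      intro p
      rcases hs with rfl | rfl <;>
        rcases hent i p.2 with h1 | h1 | h1 <;>
        rcases hent p.1 p.2 with h2 | h2 | h2 <;>
        rcases hent p.1 j with h3 | h3 | h3 <;> simp [hf, h1, h2, h3]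
    have hsum : ∑ p : Fin m × Fin n, f p = s * (B * Bᵀ * B) i j := by
      simp only [hf, Matrix.mul_apply, Matrix.transpose_apply, Finset.mul_sum,
        Finset.sum_mul, Fintype.sum_prod_type]
      exact Finset.sum_congr rfl fun k _ => Finset.sum_congr rfl fun l _ => by ring
    rw [e1, e2, count_sub_aux _ f (fun a _ => hval a), hsum]
  · rcases lt_trichotomy ((B * Bᵀ * B) i j) 0 with h | h | h
    · rw [Int.sign_eq_neg_one_of_neg h, abs_of_neg h]; ring
    · simp [h]
    · rw [Int.sign_eq_one_of_pos h, abs_of_pos h]; ring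
  · intro s hs
    rcases hs with rfl | rfl
    · simpa using neg_le_abs ((B * Bᵀ * B) i j)
    · simpa using le_abs_self ((B * Bᵀ * B) i j)
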